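/- Let f(x) = W^(2) ReLU(W^(1) x + b^(1)) + b^(2) be a one-hidden-layer ReLU network from R^d to R^m with n hidden neurons. Let u in R^d with ||u||_2 = 1 and beta in R, and let I = {i in {1, ..., n} : there exists lambda_i ≠ 0 with (W^(1)_i, b^(1)_i) = lambda_i (u, beta)}. Let x_0 satisfy <u, x_0> + beta = 0 and <W^(1)_j, x_0> + b^(1)_j ≠ 0 for every j not in I. Then there exist delta > 0, matrices A_+, A_- in R^{m x d}, and vectors c_+, c_- in R^m such that f(x) = A_+ x + c_+ for all x in the open ball B(x_0, delta) with <u, x> + beta >= 0, f(x) = A_- x + c_- for all x in B(x_0, delta) with <u, x> + beta <= 0, and A_+ - A_- = (sum_{i in I} ||W^(1)_i||_2 * W^(2)_{:,i}) u^T. -/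

import Mathlib

namespace ReLUNet

open scoped BigOperators symmDiff

/-- The standard inner product `⟨w, x⟩ = ∑ j, w j * x j` on `ℝ^d`. -/
def sInner {d : ℕ} (w x : Fin d → ℝ) : ℝ := ∑ j, w j * x j

/-- The Euclidean norm on `ℝ^d`. -/
noncomputable def euclNorm {d : ℕ} (w : Fin d → ℝ) : ℝ := Real.sqrt (∑ j, (w j) ^ 2)

/-- The (affine) hyperplane `{x : ⟨w, x⟩ + β = 0}`. -/
def Hyp {d : ℕ} (w : Fin d → ℝ) (β : ℝ) : Set (Fin d → ℝ) := {x | sInner w x + β = 0}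

/-- A polytope is the convex hull of a finite set. -/
def IsPolytope {d : ℕ} (P : Set (Fin d → ℝ)) : Prop :=
  ∃ s : Finset (Fin d → ℝ), P = convexHull ℝ (↑s : Set (Fin d → ℝ))

/-- The hyperplane `{⟨w,·⟩ + β = 0}` is *inside* `P` if it meets the relative
interior of `P` and `P` is not contained in it. -/
def HypInside {d : ℕ} (w : Fin d → ℝ) (β : ℝ) (P : Set (Fin d → ℝ)) : Prop :=
  (Hyp w β ∩ intrinsicInterior ℝ P).Nonempty ∧ ¬ P ⊆ Hyp w β

/-- The ReLU layer `x ↦ ReLU (W x + b)`. -/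
noncomputable def reluLayer {d n : ℕ} (W : Fin n → Fin d → ℝ) (b : Fin n → ℝ)
    (x : Fin d → ℝ) : Fin n → ℝ :=
  fun i => max (sInner (W i) x + b i) 0

/-- The activation pattern `S_i = {1, …, i} Δ {n}` (in `0`-based indexing:
`{j : j < i} Δ {j : j = n - 1}`). -/
def slabSet (n i : ℕ) : Set (Fin n) :=
  {j : Fin n | (j : ℕ) < i} ∆ {j : Fin n | (j : ℕ) = n - 1}

/-- A slab layer on a polytope `P`: rows nonzero, each hyperplane inside `P`,
and no two hyperplanes meet inside `P`. -/
def IsSlabLayer {d n : ℕ} (W : Fin n → Fin d → ℝ) (b : Fin n → ℝ)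
    (P : Set (Fin d → ℝ)) : Prop :=
  (∀ i, W i ≠ 0) ∧ (∀ i, HypInside (W i) (b i) P) ∧
    ∀ i j, i ≠ j → Hyp (W i) (b i) ∩ Hyp (W j) (b j) ∩ P = ∅

/-- An oriented slab layer: on `P`, the strict activation patterns are exactly
the sets `slabSet n i` for `i = 0, …, n`, and all of them occur. -/
def IsOriented {d n : ℕ} (W : Fin n → Fin d → ℝ) (b : Fin n → ℝ)
    (P : Set (Fin d → ℝ)) : Prop :=
  (∀ x ∈ P, (∀ j, sInner (W j) x + b j ≠ 0) →
      ∃ i ≤ n, {j | 0 < sInner (W j) x + b j} = slabSet n i) ∧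
    (∀ i ≤ n, ∃ x ∈ P, (∀ j, sInner (W j) x + b j ≠ 0) ∧
      {j | 0 < sInner (W j) x + b j} = slabSet n i)

/-- A ReLU layer is transparent on `X` if at every point of `X` some neuron has
nonnegative preactivation. -/
def Transparent {d n : ℕ} (W : Fin n → Fin d → ℝ) (b : Fin n → ℝ)
    (X : Set (Fin d → ℝ)) : Prop :=
  ∀ x ∈ X, ∃ i, 0 ≤ sInner (W i) x + b i

/-- The `ℓ^∞` norm of the pair `(w, β)`. -/
noncomputable def infNormPair {d : ℕ} (w : Fin d → ℝ) (β : ℝ) : ℝ :=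
  max (⨆ j, |w j|) |β|

/-- `(w', β')` is `ε`-close to `(w, β)` after normalizing by the Euclidean norms
of `w'` and `w`, up to a global sign. -/
noncomputable def EpsClose {d : ℕ} (w' : Fin d → ℝ) (β' : ℝ)
    (w : Fin d → ℝ) (β : ℝ) (ε : ℝ) : Prop :=
  min
    (infNormPair (fun j => w' j / euclNorm w' - w j / euclNorm w)
      (β' / euclNorm w' - β / euclNorm w))
    (infNormPair (fun j => w' j / euclNorm w' + w j / euclNorm w)
      (β' / euclNorm w' + β / euclNorm w)) < ε

/-- A one-hidden-layer ReLU network `x ↦ W₂ ReLU (W₁ x + b₁) + b₂`. -/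
noncomputable def oneLayer {d n m : ℕ} (W1 : Fin n → Fin d → ℝ) (b1 : Fin n → ℝ)
    (W2 : Fin m → Fin n → ℝ) (b2 : Fin m → ℝ) (x : Fin d → ℝ) : Fin m → ℝ :=
  fun p => (∑ i, W2 p i * max (sInner (W1 i) x + b1 i) 0) + b2 p

/-- The set of breakpoints of `f`: points near which `f` is not affine. -/
def Breakpoints {d m : ℕ} (f : (Fin d → ℝ) → Fin m → ℝ) : Set (Fin d → ℝ) :=
  {x | ¬ ∃ U : Set (Fin d → ℝ), IsOpen U ∧ x ∈ U ∧
      ∃ (A : Fin m → Fin d → ℝ) (c : Fin m → ℝ),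
        ∀ y ∈ U, ∀ p, f y p = (∑ j, A p j * y j) + c p}



lemma euclNorm_nonneg {d : ℕ} (w : Fin d → ℝ) : 0 ≤ euclNorm w := Real.sqrt_nonneg _

lemma abs_sInner_le {d : ℕ} (w v : Fin d → ℝ) : |sInner w v| ≤ euclNorm w * euclNorm v := by
  have h := Finset.sum_mul_sq_le_sq_mul_sq Finset.univ w v
  have := Real.sqrt_le_sqrt h
  rwa [Real.sqrt_sq_eq_abs, Real.sqrt_mul (by positivity)] at this

lemma euclNorm_smul {d : ℕ} (l : ℝ) (u : Fin d → ℝ) :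
    euclNorm (fun j => l * u j) = |l| * euclNorm u := by
  unfold euclNorm
  rw [← Real.sqrt_sq_eq_abs, ← Real.sqrt_mul (sq_nonneg l), Finset.mul_sum]
  congr 1
  exact Finset.sum_congr rfl fun j _ => by ring

/-- **Local affine decomposition of a shallow network across a hyperplane.**
Let `f = W₂ ReLU (W₁ x + b₁) + b₂` be a one-hidden-layer network, `u` a unit
vector, `β ∈ ℝ`, and `I` the set of neurons whose parameters are a nonzero
multiple of `(u, β)`.  At any point `x₀` of the hyperplane `⟨u,·⟩ + β = 0` where
all neurons outside `I` have nonzero preactivation, `f` is affine on each side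
of the hyperplane in a small ball, and the jump of the linear part is the
rank-one matrix `(∑_{i ∈ I} ‖W₁ᵢ‖₂ W₂_{:,i}) uᵀ`. -/
theorem shallow_local_tropical_weight (d m n : ℕ)
    (W1 : Fin n → Fin d → ℝ) (b1 : Fin n → ℝ)
    (W2 : Fin m → Fin n → ℝ) (b2 : Fin m → ℝ)
    (u : Fin d → ℝ) (hu : euclNorm u = 1) (β : ℝ)
    (I : Finset (Fin n))
    (hI : ∀ i, i ∈ I ↔ ∃ lam : ℝ, lam ≠ 0 ∧ (∀ j, W1 i j = lam * u j) ∧ b1 i = lam * β)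
    (x0 : Fin d → ℝ) (hx0 : sInner u x0 + β = 0)
    (hx0' : ∀ j ∉ I, sInner (W1 j) x0 + b1 j ≠ 0) :
    ∃ δ > (0 : ℝ), ∃ (Ap Am : Fin m → Fin d → ℝ) (cp cm : Fin m → ℝ),
      (∀ x, euclNorm (fun j => x j - x0 j) < δ → 0 ≤ sInner u x + β →
        ∀ p, oneLayer W1 b1 W2 b2 x p = (∑ j, Ap p j * x j) + cp p) ∧
      (∀ x, euclNorm (fun j => x j - x0 j) < δ → sInner u x + β ≤ 0 →
        ∀ p, oneLayer W1 b1 W2 b2 x p = (∑ j, Am p j * x j) + cm p) ∧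
      (∀ p j, Ap p j - Am p j = (∑ i ∈ I, euclNorm (W1 i) * W2 p i) * u j) := by
  classical
  set pre : (Fin d → ℝ) → Fin n → ℝ := fun x i => sInner (W1 i) x + b1 i with hpredef
  let lam : Fin n → ℝ := fun i =>
    if h : ∃ l : ℝ, l ≠ 0 ∧ (∀ j, W1 i j = l * u j) ∧ b1 i = l * β then h.choose else 0
  have hlam : ∀ i ∈ I, lam i ≠ 0 ∧ (∀ j, W1 i j = lam i * u j) ∧ b1 i = lam i * β := by
    intro i hi
    have h := (hI i).mp hi
    simp only [lam, dif_pos h]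
    exact h.choose_spec
  set s : Finset (Fin n) := Finset.univ.filter (fun j => j ∉ I) with hsdef
  set g : Fin n → ℝ := fun j => |pre x0 j| / (euclNorm (W1 j) + 1) with hgdef
  set δ : ℝ := if h : s.Nonempty then s.inf' h g else 1 with hδdef
  have hgpos : ∀ j ∈ s, 0 < g j := by
    intro j hj
    have hj' : j ∉ I := by simpa [hsdef] using hj
    have h1 : 0 < |pre x0 j| := abs_pos.mpr (hx0' j hj')
    have h2 : 0 < euclNorm (W1 j) + 1 := by
      have := euclNorm_nonneg (W1 j); linarith
    exact div_pos h1 h2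
  have hδpos : 0 < δ := by
    rw [hδdef]
    split_ifs with h
    · exact (Finset.lt_inf'_iff h).mpr hgpos
    · norm_num
  have hδle : ∀ j ∉ I, euclNorm (W1 j) * δ < |pre x0 j| := by
    intro j hj
    have hjs : j ∈ s := by simp [hsdef, hj]
    have hne : s.Nonempty := ⟨j, hjs⟩
    have hδg : δ ≤ g j := by rw [hδdef, dif_pos hne]; exact Finset.inf'_le g hjs
    have h2 : 0 < euclNorm (W1 j) + 1 := by
      have := euclNorm_nonneg (W1 j); linarith
    have h3 : euclNorm (W1 j) * δ ≤ euclNorm (W1 j) * g j :=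
      mul_le_mul_of_nonneg_left hδg (euclNorm_nonneg _)
    have h4 : euclNorm (W1 j) * g j < |pre x0 j| := by
      have : (euclNorm (W1 j) + 1) * g j = |pre x0 j| := by
        rw [hgdef]
        field_simp
      nlinarith [hgpos j hjs]
    linarith
  have hsign : ∀ x, euclNorm (fun j => x j - x0 j) < δ → ∀ j ∉ I,
      (0 < pre x0 j → 0 < pre x j) ∧ (pre x0 j < 0 → pre x j < 0) := by
    intro x hx j hj
    have hdiff : |pre x j - pre x0 j| ≤ euclNorm (W1 j) * euclNorm (fun k => x k - x0 k) := by
      have heq : pre x j - pre x0 j = sInner (W1 j) (fun k => x k - x0 k) := by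
        simp only [hpredef, sInner]
        rw [show (∑ k, W1 j k * (x k - x0 k)) = (∑ k, W1 j k * x k) - ∑ k, W1 j k * x0 k from by
          rw [← Finset.sum_sub_distrib]; exact Finset.sum_congr rfl fun k _ => by ring]
        ring
      rw [heq]
      exact abs_sInner_le _ _
    have hlt : |pre x j - pre x0 j| < |pre x0 j| := by
      refine lt_of_le_of_lt (hdiff.trans ?_) (hδle j hj)
      exact mul_le_mul_of_nonneg_left hx.le (euclNorm_nonneg _)
    obtain ⟨hl, hr⟩ := abs_lt.mp hlt
    constructor <;> intro h
    · rw [abs_of_pos h] at hl hr; linarith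
    · rw [abs_of_neg h] at hl hr; linarith
  let cP : Fin n → ℝ := fun i =>
    if (i ∈ I ∧ 0 < lam i) ∨ (i ∉ I ∧ 0 < pre x0 i) then 1 else 0
  let cM : Fin n → ℝ := fun i =>
    if (i ∈ I ∧ lam i < 0) ∨ (i ∉ I ∧ 0 < pre x0 i) then 1 else 0
  have key : ∀ (c : Fin n → ℝ) (x : Fin d → ℝ),
      (∀ i, max (pre x i) 0 = c i * pre x i) → ∀ p,
      oneLayer W1 b1 W2 b2 x p =
        (∑ j, (∑ i, c i * (W2 p i * W1 i j)) * x j) +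
          ((∑ i, c i * (W2 p i * b1 i)) + b2 p) := by
    intro c x hc p
    have h1 : ∀ i : Fin n, W2 p i * max (sInner (W1 i) x + b1 i) 0 =
        (∑ j, (c i * (W2 p i * W1 i j)) * x j) + c i * (W2 p i * b1 i) := by
      intro i
      have h2 : (∑ j, (c i * (W2 p i * W1 i j)) * x j)
          = (c i * W2 p i) * (∑ j, W1 i j * x j) := by
        rw [Finset.mul_sum]
        exact Finset.sum_congr rfl fun j _ => by ring
      have h3 : max (sInner (W1 i) x + b1 i) 0 = c i * pre x i := hc i
      rw [h3, h2]
      simp only [hpredef, sInner]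
      ring
    simp only [oneLayer]
    rw [Finset.sum_congr rfl fun i _ => h1 i, Finset.sum_add_distrib, Finset.sum_comm]
    rw [Finset.sum_congr rfl (fun j (_ : j ∈ Finset.univ) => (Finset.sum_mul ..).symm)]
    ring
  have hpreI : ∀ i ∈ I, ∀ x, pre x i = lam i * (sInner u x + β) := by
    intro i hi x
    obtain ⟨_, hw, hb⟩ := hlam i hi
    simp only [hpredef, sInner, hb]
    rw [Finset.sum_congr rfl fun j _ => by rw [hw j]]
    rw [show (∑ j, lam i * u j * x j) = lam i * ∑ j, u j * x j by
      rw [Finset.mul_sum]; exact Finset.sum_congr rfl fun j _ => by ring]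
    ring
  refine ⟨δ, hδpos, (fun p j => ∑ i, cP i * (W2 p i * W1 i j)),
    (fun p j => ∑ i, cM i * (W2 p i * W1 i j)),
    (fun p => (∑ i, cP i * (W2 p i * b1 i)) + b2 p),
    (fun p => (∑ i, cM i * (W2 p i * b1 i)) + b2 p), ?_, ?_, ?_⟩
  · intro x hx hside p
    refine key cP x (fun i => ?_) p
    by_cases hi : i ∈ I
    · obtain ⟨hl0, _, _⟩ := hlam i hi
      rcases hl0.lt_or_gt with hneg | hpos
      · have hc : cP i = 0 := by
          simp only [cP]
          rw [if_neg]
          rintro (⟨_, h⟩ | ⟨h, _⟩)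
          · exact absurd h (not_lt.mpr hneg.le)
          · exact h hi
        have hnp : pre x i ≤ 0 := by
          rw [hpreI i hi x]
          exact mul_nonpos_of_nonpos_of_nonneg hneg.le hside
        rw [hc, zero_mul, max_eq_right hnp]
      · have hc : cP i = 1 := by simp only [cP]; rw [if_pos (Or.inl ⟨hi, hpos⟩ : (i ∈ I ∧ 0 < lam i) ∨ (i ∉ I ∧ 0 < pre x0 i))]
        have hnp : 0 ≤ pre x i := by
          rw [hpreI i hi x]; exact mul_nonneg hpos.le hside
        rw [hc, one_mul, max_eq_left hnp]
    · have hsgn := hsign x hx i hi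
      rcases (hx0' i hi).lt_or_gt with hneg | hpos
      · have hc : cP i = 0 := by
          simp only [cP]
          rw [if_neg]
          rintro (⟨h, _⟩ | ⟨_, h⟩)
          · exact hi h
          · exact absurd hneg (not_lt.mpr h.le)
        rw [hc, zero_mul, max_eq_right (hsgn.2 hneg).le]
      · have hc : cP i = 1 := by simp only [cP]; rw [if_pos (Or.inr ⟨hi, hpos⟩ : (i ∈ I ∧ 0 < lam i) ∨ (i ∉ I ∧ 0 < pre x0 i))]
        rw [hc, one_mul, max_eq_left (hsgn.1 hpos).le]
  · intro x hx hside p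
    refine key cM x (fun i => ?_) p
    by_cases hi : i ∈ I
    · obtain ⟨hl0, _, _⟩ := hlam i hi
      rcases hl0.lt_or_gt with hneg | hpos
      · have hc : cM i = 1 := by simp only [cM]; rw [if_pos (Or.inl ⟨hi, hneg⟩ : (i ∈ I ∧ lam i < 0) ∨ (i ∉ I ∧ 0 < pre x0 i))]
        have hnp : 0 ≤ pre x i := by
          rw [hpreI i hi x]; nlinarith [hneg.le, hside]
        rw [hc, one_mul, max_eq_left hnp]
      · have hc : cM i = 0 := by
          simp only [cM]
          rw [if_neg]
          rintro (⟨_, h⟩ | ⟨h, _⟩)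
          · exact absurd hpos (not_lt.mpr h.le)
          · exact h hi
        have hnp : pre x i ≤ 0 := by
          rw [hpreI i hi x]; exact mul_nonpos_of_nonneg_of_nonpos hpos.le hside
        rw [hc, zero_mul, max_eq_right hnp]
    · have hsgn := hsign x hx i hi
      rcases (hx0' i hi).lt_or_gt with hneg | hpos
      · have hc : cM i = 0 := by
          simp only [cM]
          rw [if_neg]
          rintro (⟨h, _⟩ | ⟨_, h⟩)
          · exact hi h
          · exact absurd hneg (not_lt.mpr h.le)
        rw [hc, zero_mul, max_eq_right (hsgn.2 hneg).le]
      · have hc : cM i = 1 := by simp only [cM]; rw [if_pos (Or.inr ⟨hi, hpos⟩ : (i ∈ I ∧ lam i < 0) ∨ (i ∉ I ∧ 0 < pre x0 i))]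
        rw [hc, one_mul, max_eq_left (hsgn.1 hpos).le]
  · intro p j
    rw [← Finset.sum_sub_distrib]
    have hterm : ∀ i ∈ I, cP i * (W2 p i * W1 i j) - cM i * (W2 p i * W1 i j)
        = euclNorm (W1 i) * W2 p i * u j := by
      intro i hi
      obtain ⟨hl0, hw, _⟩ := hlam i hi
      have hnorm : euclNorm (W1 i) = |lam i| := by
        have : W1 i = fun k => lam i * u k := funext hw
        rw [this, euclNorm_smul, hu, mul_one]
      rcases hl0.lt_or_gt with hneg | hpos
      · have h1 : cP i = 0 := by
          simp only [cP]
          rw [if_neg]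
          rintro (⟨_, h⟩ | ⟨h, _⟩)
          · exact absurd h (not_lt.mpr hneg.le)
          · exact h hi
        have h2 : cM i = 1 := by simp only [cM]; rw [if_pos (Or.inl ⟨hi, hneg⟩ : (i ∈ I ∧ lam i < 0) ∨ (i ∉ I ∧ 0 < pre x0 i))]
        rw [h1, h2, hnorm, abs_of_neg hneg, hw j]
        ring
      · have h1 : cP i = 1 := by simp only [cP]; rw [if_pos (Or.inl ⟨hi, hpos⟩ : (i ∈ I ∧ 0 < lam i) ∨ (i ∉ I ∧ 0 < pre x0 i))]
        have h2 : cM i = 0 := by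
          simp only [cM]
          rw [if_neg]
          rintro (⟨_, h⟩ | ⟨h, _⟩)
          · exact absurd hpos (not_lt.mpr h.le)
          · exact h hi
        rw [h1, h2, hnorm, abs_of_pos hpos, hw j]
        ring
    rw [← Finset.sum_subset (Finset.subset_univ I)
      (fun i _ hiI => by
        rcases (hx0' i hiI).lt_or_gt with hneg | hpos
        · have h1 : cP i = 0 := by
            simp only [cP]
            rw [if_neg]
            rintro (⟨h, _⟩ | ⟨_, h⟩)
            · exact hiI h
            · exact absurd hneg (not_lt.mpr h.le)
          have h2 : cM i = 0 := by
            simp only [cM]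
            rw [if_neg]
            rintro (⟨h, _⟩ | ⟨_, h⟩)
            · exact hiI h
            · exact absurd hneg (not_lt.mpr h.le)
          rw [h1, h2]; ring
        · have h1 : cP i = 1 := by simp only [cP]; rw [if_pos (Or.inr ⟨hiI, hpos⟩ : (i ∈ I ∧ 0 < lam i) ∨ (i ∉ I ∧ 0 < pre x0 i))]
          have h2 : cM i = 1 := by simp only [cM]; rw [if_pos (Or.inr ⟨hiI, hpos⟩ : (i ∈ I ∧ lam i < 0) ∨ (i ∉ I ∧ 0 < pre x0 i))]
          rw [h1, h2]; ring)]
    rw [Finset.sum_congr rfl hterm, Finset.sum_mul]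


end ReLUNet
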